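/- For every integer k ≥ 6 and every prime power q with q ≥ k−2, there exists a q-divisible [q² + 2q − 1, k, q² − (k−4)q]_q linear code in which the number of codewords of minimum Hamming weight q² − (k−4)q is exactly (q−1)·(C(q, k−4) + C(q, k−3)), where C(a,b) denotes the binomial coefficient. -/

import Mathlib

open Polynomial Finset

namespace S5

variable {F : Type} [Field F] [Fintype F] [DecidableEq F]

/-! ### Hamming norm helpers -/

lemma hn_eq_sum {α : Type} [Fintype α] (x : α → F) :
    hammingNorm x = ∑ a : α, if x a ≠ 0 then 1 else 0 := by
  simp [hammingNorm, Finset.card_filter]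

lemma hn_card_sub {α : Type} [Fintype α] (x : α → F) :
    hammingNorm x + (∑ a : α, if x a = 0 then 1 else 0) = Fintype.card α := by
  rw [hn_eq_sum, ← Finset.sum_add_distrib]
  have h : ∀ a : α, ((if x a ≠ 0 then (1:ℕ) else 0) + if x a = 0 then 1 else 0) = 1 := by
    intro a; by_cases h : x a = 0 <;> simp [h]
  simp only [h]
  simp [Finset.card_univ]

lemma hn_sum_elim {α β : Type} [Fintype α] [Fintype β]
    (u : α → F) (v : β → F) :
    hammingNorm (Sum.elim u v) = hammingNorm u + hammingNorm v := by
  rw [hn_eq_sum, hn_eq_sum, hn_eq_sum, Fintype.sum_sum_type]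
  simp
  congr 1 <;> exact Finset.sum_congr rfl fun a _ => by split_ifs <;> simp_all

lemma hn_comp_equiv {α β : Type} [Fintype α] [Fintype β]
    (e : α ≃ β) (w : β → F) :
    hammingNorm (fun i => w (e i)) = hammingNorm w := by
  unfold hammingNorm
  exact Finset.card_equiv e (by simp)

lemma sum_solve (u v : F) :
    (∑ y : F, if u * y + v = 0 then (1:ℕ) else 0)
      = if u = 0 then (if v = 0 then Fintype.card F else 0) else 1 := by
  rcases eq_or_ne u 0 with hu | hu
  · rcases eq_or_ne v 0 with hv | hv <;> simp [hu, hv, Finset.card_univ]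
  · rw [if_neg hu]
    have key : ∀ y : F, (u * y + v = 0) ↔ y = -v / u := by
      intro y
      rw [eq_div_iff hu]
      constructor
      · intro h; linear_combination h
      · intro h; linear_combination h
    simp only [key]
    simp

/-! ### The word map -/

def blkf (b c : F) : F → F := fun t => b * t + c

def mainf (a b : F) (p : F[X]) : F × F → F :=
  fun xy => (a + b * xy.1) * xy.2 + p.eval xy.1

variable (r : ℕ)

def wd (v : F × F × degreeLT F (r + 2)) : (F × F) ⊕ F → F :=
  Sum.elim (mainf v.1 v.2.1 (v.2.2 : F[X])) (blkf v.2.1 ((v.2.2 : F[X]).coeff (r + 1)))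

def Phi : (F × F × degreeLT F (r + 2)) →ₗ[F] ((F × F) ⊕ F → F) where
  toFun := wd r
  map_add' := by
    rintro ⟨a, b, p⟩ ⟨a', b', p'⟩
    funext i
    cases i with
    | inl xy => simp [wd, mainf]; ring
    | inr t => simp [wd, blkf]; ring
  map_smul' := by
    rintro c ⟨a, b, p⟩
    funext i
    cases i with
    | inl xy => simp [wd, mainf, smul_eq_mul]; ring
    | inr t => simp [wd, blkf, smul_eq_mul]; ring

lemma hn_blkf_ne (b c : F) (hb : b ≠ 0) :
    hammingNorm (blkf b c) + 1 = Fintype.card F := by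
  have h := hn_card_sub (blkf b c)
  have h2 : (∑ t : F, if blkf b c t = 0 then (1:ℕ) else 0) = 1 := by
    rw [show (∑ t : F, if blkf b c t = 0 then (1:ℕ) else 0)
        = ∑ t : F, if b * t + c = 0 then (1:ℕ) else 0 from rfl, sum_solve, if_neg hb]
  omega

lemma hn_blkf_zero (c : F) :
    hammingNorm (blkf 0 c) = if c = 0 then 0 else Fintype.card F := by
  rcases eq_or_ne c 0 with hc | hc <;>
    simp [hn_eq_sum, blkf, hc, Finset.card_univ]

lemma hn_mainf (a b : F) (p : F[X]) :
    hammingNorm (mainf a b p)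
      + ∑ x : F, (if a + b * x = 0 then (if p.eval x = 0 then Fintype.card F else 0) else 1)
      = Fintype.card F * Fintype.card F := by
  have h := hn_card_sub (mainf a b p)
  rw [Fintype.card_prod] at h
  rw [← h]
  congr 1
  rw [Fintype.sum_prod_type]
  refine Finset.sum_congr rfl fun x _ => ?_
  exact (sum_solve (a + b * x) (p.eval x)).symm

/-- the number of distinct roots -/
lemma filter_eval_eq_roots {p : F[X]} (hp : p ≠ 0) :
    (univ.filter fun x => p.eval x = 0) = p.roots.toFinset := by
  ext x
  simp [Polynomial.mem_roots', hp, IsRoot]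

lemma card_roots_compl {p : F[X]} (hp : p ≠ 0) :
    (∑ x : F, if p.eval x = 0 then (1:ℕ) else 0) = p.roots.toFinset.card := by
  rw [← Finset.card_filter, filter_eval_eq_roots hp]

/-! ### Case computations -/

/-- Case `a ≠ 0` or `b ≠ 0`. -/
lemma hn_wd_ab (a b : F) (p : degreeLT F (r + 2)) (hab : ¬(a = 0 ∧ b = 0)) :
    hammingNorm (wd r (a, b, p)) = Fintype.card F * Fintype.card F ∨
      hammingNorm (wd r (a, b, p)) = (Fintype.card F - 1) * Fintype.card F := by
  have hq : 1 ≤ Fintype.card F := Fintype.card_pos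
  have hkey : (Fintype.card F - 1) * Fintype.card F + Fintype.card F
      = Fintype.card F * Fintype.card F := by
    have h2 : (Fintype.card F - 1) + 1 = Fintype.card F := by omega
    calc (Fintype.card F - 1) * Fintype.card F + Fintype.card F
        = ((Fintype.card F - 1) + 1) * Fintype.card F := by ring
      _ = Fintype.card F * Fintype.card F := by rw [h2]
  have hsplit : hammingNorm (wd r (a, b, p))
      = hammingNorm (mainf a b ((p : F[X])))
        + hammingNorm (blkf b ((p : F[X]).coeff (r + 1))) := hn_sum_elim _ _
  have hmain := hn_mainf a b (p : F[X])
  rcases eq_or_ne b 0 with hb | hb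
  · -- b = 0, a ≠ 0
    subst hb
    have ha : a ≠ 0 := by tauto
    have hsum : (∑ x : F, (if a + 0 * x = 0 then
        (if (p : F[X]).eval x = 0 then Fintype.card F else 0) else 1)) = Fintype.card F := by
      have h1 : ∀ x : F, (if a + 0 * x = 0 then
          (if (p : F[X]).eval x = 0 then Fintype.card F else 0) else 1) = 1 := by
        intro x; rw [if_neg (by simpa using ha)]
      simp only [h1]
      simp [Finset.card_univ]
    rw [hsum] at hmain
    have hblk := hn_blkf_zero ((p : F[X]).coeff (r + 1))
    rcases eq_or_ne ((p : F[X]).coeff (r + 1)) 0 with hc | hc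
    · right; rw [hsplit, hblk, if_pos hc]; omega
    · left; rw [hsplit, hblk, if_neg hc]; omega
  · -- b ≠ 0
    have hblk := hn_blkf_ne b ((p : F[X]).coeff (r + 1)) hb
    have hx0eq : a + b * (-a / b) = 0 := by
      field_simp
      ring
    have hxother : ∀ x : F, x ≠ -a / b → a + b * x ≠ 0 := by
      intro x hx h
      apply hx
      field_simp
      linear_combination h
    have hsum : (∑ x : F, (if a + b * x = 0 then
        (if (p : F[X]).eval x = 0 then Fintype.card F else 0) else 1))
        = (if (p : F[X]).eval (-a / b) = 0 then Fintype.card F else 0)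
          + (Fintype.card F - 1) := by
      rw [← Finset.add_sum_erase _ _ (Finset.mem_univ (-a / b)), if_pos hx0eq]
      congr 1
      have h1 : ∀ x ∈ univ.erase (-a / b), (if a + b * x = 0 then
          (if (p : F[X]).eval x = 0 then Fintype.card F else 0) else 1) = 1 := by
        intro x hx
        rw [if_neg (hxother x (Finset.ne_of_mem_erase hx))]
      rw [Finset.sum_congr rfl h1]
      simp [Finset.card_erase_of_mem, Finset.card_univ]
    rw [hsum] at hmain
    rcases eq_or_ne ((p : F[X]).eval (-a / b)) 0 with he | he
    · right; rw [if_pos he] at hmain; rw [hsplit]; omega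
    · left; rw [if_neg he] at hmain; rw [hsplit]; omega

/-- Case `a = b = 0`, `p ≠ 0`. -/
lemma hn_wd_00 (p : degreeLT F (r + 2)) (hp : (p : F[X]) ≠ 0) :
    hammingNorm (wd r (0, 0, p)) =
      (Fintype.card F - (p : F[X]).roots.toFinset.card) * Fintype.card F
        + (if (p : F[X]).coeff (r + 1) = 0 then 0 else Fintype.card F) := by
  have hsplit : hammingNorm (wd r ((0:F), (0:F), p))
      = hammingNorm (mainf 0 0 ((p : F[X])))
        + hammingNorm (blkf 0 ((p : F[X]).coeff (r + 1))) := hn_sum_elim _ _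
  have hZ : (p : F[X]).roots.toFinset.card ≤ Fintype.card F := by
    rw [← Finset.card_univ]
    exact Finset.card_le_card (Finset.subset_univ _)
  have hmain : hammingNorm (mainf 0 0 ((p : F[X])))
      = (Fintype.card F - (p : F[X]).roots.toFinset.card) * Fintype.card F := by
    have h := hn_mainf 0 0 (p : F[X])
    have hsum : (∑ x : F, (if (0:F) + 0 * x = 0 then
        (if (p : F[X]).eval x = 0 then Fintype.card F else 0) else 1))
        = (p : F[X]).roots.toFinset.card * Fintype.card F := by
      have h1 : ∀ x : F, (if (0:F) + 0 * x = 0 then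
          (if (p : F[X]).eval x = 0 then Fintype.card F else 0) else 1)
          = (if (p : F[X]).eval x = 0 then (1:ℕ) else 0) * Fintype.card F := by
        intro x
        rw [if_pos (by ring)]
        by_cases h : (p : F[X]).eval x = 0 <;> simp [h]
      rw [Finset.sum_congr rfl fun x _ => h1 x, ← Finset.sum_mul,
        card_roots_compl hp]
    rw [hsum] at h
    have hle : (p : F[X]).roots.toFinset.card * Fintype.card F
        ≤ Fintype.card F * Fintype.card F :=
      Nat.mul_le_mul_right _ hZ
    have h2 : (Fintype.card F - (p : F[X]).roots.toFinset.card) * Fintype.card F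
        + (p : F[X]).roots.toFinset.card * Fintype.card F
        = Fintype.card F * Fintype.card F := by
      rw [← add_mul]
      congr 1
      omega
    omega
  rw [hsplit, hmain, hn_blkf_zero]

/-- `Good r p` says `p` is a nonzero polynomial all of whose roots are simple and in `F`,
of degree `r` or `r+1`. -/
def Good (p : F[X]) : Prop :=
  p ≠ 0 ∧ p.roots.toFinset.card = p.natDegree ∧ (p.natDegree = r ∨ p.natDegree = r + 1)

lemma natDegree_le_of_mem {p : F[X]} (hmem : p ∈ degreeLT F (r + 2)) (hp : p ≠ 0) :
    p.natDegree ≤ r + 1 := by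
  have := (Polynomial.natDegree_lt_iff_degree_lt hp).mpr (Polynomial.mem_degreeLT.mp hmem)
  omega

lemma natDegree_le_of_coeff_zero {p : F[X]} (hmem : p ∈ degreeLT F (r + 2)) (hp : p ≠ 0)
    (hc : p.coeff (r + 1) = 0) : p.natDegree ≤ r := by
  have h1 := natDegree_le_of_mem r hmem hp
  by_contra h
  have hd : p.natDegree = r + 1 := by omega
  have := Polynomial.leadingCoeff_ne_zero.mpr hp
  rw [Polynomial.leadingCoeff, hd] at this
  exact this hc

lemma natDegree_eq_of_coeff_ne {p : F[X]} (hmem : p ∈ degreeLT F (r + 2)) (hp : p ≠ 0)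
    (hc : p.coeff (r + 1) ≠ 0) : p.natDegree = r + 1 :=
  le_antisymm (natDegree_le_of_mem r hmem hp) (Polynomial.le_natDegree_of_ne_zero hc)

lemma roots_card_le {p : F[X]} : p.roots.toFinset.card ≤ p.natDegree :=
  le_trans (Multiset.toFinset_card_le _) (Polynomial.card_roots' p)

/-- Full characterization for the `a = b = 0` case. -/
lemma hn_wd_00_iff (hr : 2 ≤ r) (hrq : r + 2 ≤ Fintype.card F)
    (p : degreeLT F (r + 2)) (hp : (p : F[X]) ≠ 0) :
    (Fintype.card F - r) * Fintype.card F ≤ hammingNorm (wd r (0, 0, p)) ∧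
    Fintype.card F ∣ hammingNorm (wd r (0, 0, p)) ∧
    (hammingNorm (wd r (0, 0, p)) = (Fintype.card F - r) * Fintype.card F
      ↔ Good r ((p : F[X]))) := by
  have hq : 0 < Fintype.card F := Fintype.card_pos
  have h00 := hn_wd_00 r p hp
  set Z := (p : F[X]).roots.toFinset.card with hZdef
  have hZle : Z ≤ (p : F[X]).natDegree := roots_card_le
  rcases eq_or_ne ((p : F[X]).coeff (r + 1)) 0 with hc | hc
  · have hdeg : (p : F[X]).natDegree ≤ r := natDegree_le_of_coeff_zero r p.2 hp hc
    have hZr : Z ≤ r := le_trans hZle hdeg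
    rw [if_pos hc, add_zero] at h00
    refine ⟨?_, ?_, ?_⟩
    · rw [h00]; exact Nat.mul_le_mul_right _ (by omega)
    · rw [h00]; exact dvd_mul_left _ _
    · rw [h00]
      constructor
      · intro h
        have h2 : Fintype.card F - Z = Fintype.card F - r :=
          Nat.eq_of_mul_eq_mul_right hq h
        have hZr' : Z = r := by omega
        exact ⟨hp, by omega, Or.inl (by omega)⟩
      · rintro ⟨-, hcard, hor⟩
        have hdr : (p : F[X]).natDegree = r := by
          rcases hor with h | h
          · exact h
          · omega
        have hZeq : Z = r := by rw [hZdef, hcard, hdr]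
        rw [hZeq]
  · have hdeg : (p : F[X]).natDegree = r + 1 := natDegree_eq_of_coeff_ne r p.2 hp hc
    have hZr : Z ≤ r + 1 := by omega
    rw [if_neg hc] at h00
    have h00' : hammingNorm (wd r ((0:F), (0:F), p))
        = (Fintype.card F - Z + 1) * Fintype.card F := by
      rw [h00, add_mul, one_mul]
    refine ⟨?_, ?_, ?_⟩
    · rw [h00']; exact Nat.mul_le_mul_right _ (by omega)
    · rw [h00']; exact dvd_mul_left _ _
    · rw [h00']
      constructor
      · intro h
        have h2 : Fintype.card F - Z + 1 = Fintype.card F - r :=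
          Nat.eq_of_mul_eq_mul_right hq h
        have hZr' : Z = r + 1 := by omega
        exact ⟨hp, by omega, Or.inr (by omega)⟩
      · rintro ⟨-, hcard, hor⟩
        have hZeq : Z = r + 1 := by
          rcases hor with h | h
          · omega
          · omega
        have h2 : Fintype.card F - Z + 1 = Fintype.card F - r := by omega
        rw [h2]

/-! ### Structure of good polynomials -/

noncomputable def gpoly (l : F) (s : Finset F) : F[X] := C l * ∏ α ∈ s, (X - C α)

lemma gpoly_props (l : F) (hl : l ≠ 0) (s : Finset F) :
    gpoly l s ≠ 0 ∧ (gpoly l s).natDegree = s.card ∧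
      (gpoly l s).leadingCoeff = l ∧ (gpoly l s).roots.toFinset = s := by
  have hm : (∏ α ∈ s, (X - C α) : F[X]).Monic :=
    monic_prod_of_monic _ _ fun α _ => monic_X_sub_C α
  have hne : gpoly l s ≠ 0 := mul_ne_zero (C_ne_zero.mpr hl) hm.ne_zero
  refine ⟨hne, ?_, ?_, ?_⟩
  · unfold gpoly
    rw [Polynomial.natDegree_C_mul hl,
      Polynomial.natDegree_prod _ _ (fun α _ => X_sub_C_ne_zero α)]
    simp
  · unfold gpoly
    rw [Polynomial.leadingCoeff_mul, Polynomial.leadingCoeff_C, hm.leadingCoeff, mul_one]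
  · unfold gpoly
    rw [Polynomial.roots_C_mul _ hl, Polynomial.roots_prod_X_sub_C]
    exact s.val_toFinset

lemma good_structure {p : F[X]} (h : Good r p) :
    p = gpoly p.leadingCoeff p.roots.toFinset ∧ p.leadingCoeff ≠ 0 := by
  obtain ⟨hp, hcard, _⟩ := h
  have h1 : Multiset.card p.roots ≤ p.natDegree := Polynomial.card_roots' p
  have h2 : p.roots.toFinset.card ≤ Multiset.card p.roots := Multiset.toFinset_card_le _
  have hcards : Multiset.card p.roots = p.natDegree := by omega
  have hnodup : p.roots.Nodup := Multiset.toFinset_card_eq_card_iff_nodup.mp (by omega)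
  have hsplits : Splits p := Polynomial.splits_iff_card_roots.mpr hcards
  have heq := hsplits.eq_prod_roots
  refine ⟨?_, Polynomial.leadingCoeff_ne_zero.mpr hp⟩
  conv_lhs => rw [heq]
  unfold gpoly
  congr 1
  rw [Finset.prod_eq_multiset_prod]
  have hval : p.roots.toFinset.val = p.roots := by
    rw [Multiset.toFinset_val, Multiset.dedup_eq_self.mpr hnodup]
  rw [hval]

/-! ### Global min-weight facts -/

lemma wd_zero_of (p : degreeLT F (r + 2)) (hp : (p : F[X]) = 0) :
    wd r ((0 : F), (0 : F), p) = 0 := by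
  funext i
  cases i with
  | inl xy => simp [wd, mainf, hp]
  | inr t => simp [wd, blkf, hp]

lemma wd_bound (hr : 2 ≤ r) (hrq : r + 2 ≤ Fintype.card F)
    (v : F × F × degreeLT F (r + 2)) :
    Fintype.card F ∣ hammingNorm (wd r v) ∧
      (v ≠ 0 → (Fintype.card F - r) * Fintype.card F ≤ hammingNorm (wd r v)) := by
  obtain ⟨a, b, p⟩ := v
  have hq : 0 < Fintype.card F := Fintype.card_pos
  by_cases hab : a = 0 ∧ b = 0
  · obtain ⟨rfl, rfl⟩ := hab
    by_cases hp : (p : F[X]) = 0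
    · rw [wd_zero_of r p hp, hammingNorm_zero]
      refine ⟨dvd_zero _, fun hv => absurd ?_ hv⟩
      ext <;> simp [Subtype.ext_iff, hp]
    · obtain ⟨hle, hdvd, _⟩ := hn_wd_00_iff r hr hrq p hp
      exact ⟨hdvd, fun _ => hle⟩
  · rcases hn_wd_ab r a b p hab with h | h <;> rw [h]
    · exact ⟨dvd_mul_left _ _, fun _ => Nat.mul_le_mul_right _ (by omega)⟩
    · exact ⟨dvd_mul_left _ _, fun _ => Nat.mul_le_mul_right _ (by omega)⟩

lemma wd_min_iff (hr : 2 ≤ r) (hrq : r + 2 ≤ Fintype.card F)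
    (v : F × F × degreeLT F (r + 2)) :
    hammingNorm (wd r v) = (Fintype.card F - r) * Fintype.card F ↔
      v.1 = 0 ∧ v.2.1 = 0 ∧ Good r ((v.2.2 : F[X])) := by
  obtain ⟨a, b, p⟩ := v
  have hq : 0 < Fintype.card F := Fintype.card_pos
  by_cases hab : a = 0 ∧ b = 0
  · obtain ⟨rfl, rfl⟩ := hab
    by_cases hp : (p : F[X]) = 0
    · rw [wd_zero_of r p hp, hammingNorm_zero]
      simp only [eq_comm (a := (0:ℕ))]
      constructor
      · intro h
        exfalso
        have : 0 < (Fintype.card F - r) * Fintype.card F := Nat.mul_pos (by omega) hq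
        omega
      · rintro ⟨-, -, hg, -⟩
        exact absurd hp hg
    · rw [(hn_wd_00_iff r hr hrq p hp).2.2]
      simp
  · constructor
    · intro h
      exfalso
      rcases hn_wd_ab r a b p hab with h2 | h2 <;> rw [h2] at h
      · have := Nat.eq_of_mul_eq_mul_right hq h
        omega
      · have := Nat.eq_of_mul_eq_mul_right hq h
        omega
    · rintro ⟨rfl, rfl, -⟩
      exact absurd ⟨rfl, rfl⟩ hab

lemma wd_inj (hrq : r + 2 ≤ Fintype.card F)
    (v : F × F × degreeLT F (r + 2)) (h : wd r v = 0) : v = 0 := by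
  obtain ⟨a, b, p⟩ := v
  have heval : ∀ x : F, (p : F[X]).eval x = 0 := by
    intro x
    have h1 := congrFun h (Sum.inl (x, 0))
    simpa [wd, mainf] using h1
  have hp : (p : F[X]) = 0 := by
    by_contra hp
    have hfull : (univ.filter fun x : F => (p : F[X]).eval x = 0) = univ :=
      Finset.filter_true_of_mem fun x _ => heval x
    have hcard : (p : F[X]).roots.toFinset.card = Fintype.card F := by
      rw [← filter_eval_eq_roots hp, hfull, Finset.card_univ]
    have h1 : (p : F[X]).natDegree ≤ r + 1 := natDegree_le_of_mem r p.2 hp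
    have h2 := roots_card_le (p := (p : F[X]))
    omega
  have ha : a = 0 := by
    have h1 := congrFun h (Sum.inl (0, 1))
    simpa [wd, mainf, hp] using h1
  have hb : b = 0 := by
    have h1 := congrFun h (Sum.inl (1, 1))
    simpa [wd, mainf, hp, ha] using h1
  simp [Prod.ext_iff, ha, hb, Subtype.ext_iff, hp]

end S5

/-- `C` is an `[n, k, d]_q` linear code over `F`: a `k`-dimensional `F`-linear subspace of
`F^n` such that the minimum Hamming weight of a nonzero codeword equals `d`. -/
def IsLinearCodeWith (F : Type) [Field F] [DecidableEq F] (n k d : ℕ)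
    (C : Submodule F (Fin n → F)) : Prop :=
  Module.finrank F C = k ∧
  (∀ c ∈ C, c ≠ 0 → d ≤ hammingNorm c) ∧
  (∃ c ∈ C, c ≠ 0 ∧ hammingNorm c = d)

/-- For every integer `k ≥ 6` and every prime power `q ≥ k - 2`, there exists a
`q`-divisible `[q² + 2q - 1, k, q² - (k-4)q]_q` code having exactly
`(q-1)·(C(q, k-4) + C(q, k-3))` codewords of minimum weight `q² - (k-4)q`. -/
theorem statement5 (k q : ℕ) (hk : 6 ≤ k) (hq : IsPrimePow q) (hkq : k - 2 ≤ q)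
    (F : Type) [Field F] [Fintype F] [DecidableEq F] (hF : Fintype.card F = q) :
    ∃ C : Submodule F (Fin (q ^ 2 + 2 * q - 1) → F),
      IsLinearCodeWith F (q ^ 2 + 2 * q - 1) k (q ^ 2 - (k - 4) * q) C ∧
      (∀ c ∈ C, q ∣ hammingNorm c) ∧
      {c : Fin (q ^ 2 + 2 * q - 1) → F |
          c ∈ C ∧ hammingNorm c = q ^ 2 - (k - 4) * q}.ncard
        = (q - 1) * (Nat.choose q (k - 4) + Nat.choose q (k - 3)) := by
  classical
  subst hF
  obtain ⟨r, rfl⟩ : ∃ r, k = r + 4 := ⟨k - 4, by omega⟩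
  have hr : 2 ≤ r := by omega
  have hrq : r + 2 ≤ Fintype.card F := by omega
  have hq4 : 4 ≤ Fintype.card F := by omega
  have hq0 : 0 < Fintype.card F := by omega
  have h4 : r + 4 - 4 = r := by omega
  have h3 : r + 4 - 3 = r + 1 := by omega
  have hsq : Fintype.card F ^ 2 = Fintype.card F * Fintype.card F := pow_two _
  have hd : Fintype.card F ^ 2 - r * Fintype.card F
      = (Fintype.card F - r) * Fintype.card F := by
    rw [hsq, tsub_mul]
  rw [h4, h3, hd]
  -- the index equivalence
  have hcardJ : Fintype.card (Fin (Fintype.card F ^ 2 + 2 * Fintype.card F - 1))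
      = Fintype.card (((F × F) ⊕ F) ⊕ Fin (Fintype.card F - 1)) := by
    simp only [Fintype.card_fin, Fintype.card_sum, Fintype.card_prod]
    omega
  set e := Fintype.equivOfCardEq hcardJ with he
  -- padding linear map
  set padL : (((F × F) ⊕ F) → F) →ₗ[F] ((((F × F) ⊕ F) ⊕ Fin (Fintype.card F - 1)) → F) :=
    { toFun := fun w => Sum.elim w 0
      map_add' := by
        intro u v; funext i; cases i with
        | inl j => simp
        | inr j => simp
      map_smul' := by
        intro c u; funext i; cases i with
        | inl j => simp
        | inr j => simp } with hpadL
  set Ψ := (LinearEquiv.funCongrLeft F F e).toLinearMap.comp (padL.comp (S5.Phi (F := F) r))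
    with hΨ
  have hnΨ : ∀ v, hammingNorm (Ψ v) = hammingNorm (S5.wd r v) := by
    intro v
    have h0 : Ψ v = fun i => Sum.elim (S5.wd r v) (0 : Fin (Fintype.card F - 1) → F) (e i) :=
      rfl
    rw [h0, S5.hn_comp_equiv e, S5.hn_sum_elim, hammingNorm_zero, add_zero]
  have hinj : Function.Injective Ψ := by
    rw [← LinearMap.ker_eq_bot, LinearMap.ker_eq_bot']
    intro v hv
    have h1 : hammingNorm (Ψ v) = 0 := by rw [hv, hammingNorm_zero]
    rw [hnΨ v] at h1
    exact S5.wd_inj r hrq v (hammingNorm_eq_zero.mp h1)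
  refine ⟨LinearMap.range Ψ, ⟨?_, ?_, ?_⟩, ?_, ?_⟩
  · -- finrank
    haveI : Module.Finite F (degreeLT F (r + 2)) :=
      Module.Finite.equiv (degreeLTEquiv F (r + 2)).symm
    rw [LinearMap.finrank_range_of_inj hinj, Module.finrank_prod, Module.finrank_prod,
      Module.finrank_self, (degreeLTEquiv F (r + 2)).finrank_eq, Module.finrank_fin_fun]
    omega
  · -- lower bound
    intro c hc hc0
    obtain ⟨v, rfl⟩ := hc
    have hv0 : v ≠ 0 := by
      rintro rfl
      exact hc0 (map_zero _)
    rw [hnΨ]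
    exact (S5.wd_bound r hr hrq v).2 hv0
  · -- existence of a minimum-weight word
    obtain ⟨s, -, hs⟩ := Finset.exists_subset_card_eq
      (s := (univ : Finset F)) (n := r) (by rw [Finset.card_univ]; omega)
    obtain ⟨hne, hdeg, hlc, hroots⟩ := S5.gpoly_props (1 : F) one_ne_zero s
    have hmem : S5.gpoly (1 : F) s ∈ degreeLT F (r + 2) := by
      rw [Polynomial.mem_degreeLT]
      exact (Polynomial.natDegree_lt_iff_degree_lt hne).mp (by omega)
    refine ⟨Ψ ((0 : F), (0 : F), ⟨S5.gpoly (1 : F) s, hmem⟩), ⟨_, rfl⟩, ?_, ?_⟩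
    · intro h
      have hv := hinj (by rw [h, map_zero] : Ψ _ = Ψ 0)
      have : S5.gpoly (1 : F) s = 0 := by
        have := congrArg (fun t : F × F × degreeLT F (r + 2) => ((t.2.2 : F[X]))) hv
        simpa using this
      exact hne this
    · rw [hnΨ]
      refine (S5.wd_min_iff r hr hrq _).mpr ⟨rfl, rfl, hne, ?_, ?_⟩
      · rw [hroots, hdeg]
      · left; rw [hdeg, hs]
  · -- divisibility
    intro c hc
    obtain ⟨v, rfl⟩ := hc
    rw [hnΨ]
    exact (S5.wd_bound r hr hrq v).1
  · -- counting
    have hSeq : {c | c ∈ LinearMap.range Ψ ∧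
        hammingNorm c = (Fintype.card F - r) * Fintype.card F}
        = Ψ '' {v | hammingNorm (S5.wd r v) = (Fintype.card F - r) * Fintype.card F} := by
      ext c
      simp only [Set.mem_setOf_eq, Set.mem_image, LinearMap.mem_range]
      constructor
      · rintro ⟨⟨v, rfl⟩, h2⟩
        exact ⟨v, by rw [← hnΨ v]; exact h2, rfl⟩
      · rintro ⟨v, h1, rfl⟩
        exact ⟨⟨v, rfl⟩, by rw [hnΨ]; exact h1⟩
    rw [hSeq, Set.ncard_image_of_injective _ hinj]
    set θ : F × Finset F → F × F × degreeLT F (r + 2) := fun ls =>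
      if h : S5.gpoly ls.1 ls.2 ∈ degreeLT F (r + 2) then ((0 : F), (0 : F), ⟨_, h⟩) else 0
      with hθ
    set D : Finset (F × Finset F) :=
      (univ.filter fun l : F => l ≠ 0) ×ˢ
        ((univ : Finset F).powersetCard r ∪ (univ : Finset F).powersetCard (r + 1)) with hD
    have hMem : ∀ l : F, ∀ s : Finset F, (l, s) ∈ D →
        l ≠ 0 ∧ (s.card = r ∨ s.card = r + 1) := by
      intro l s hls
      rw [hD, Finset.mem_product, Finset.mem_filter, Finset.mem_union,
        Finset.mem_powersetCard, Finset.mem_powersetCard] at hls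
      simp only at hls
      tauto
    have hgmem : ∀ l : F, ∀ s : Finset F, l ≠ 0 → s.card ≤ r + 1 →
        S5.gpoly l s ∈ degreeLT F (r + 2) := by
      intro l s hl hcard
      obtain ⟨hne, hdeg, -, -⟩ := S5.gpoly_props l hl s
      rw [Polynomial.mem_degreeLT]
      exact (Polynomial.natDegree_lt_iff_degree_lt hne).mp (by omega)
    have hVD : {v | hammingNorm (S5.wd r v) = (Fintype.card F - r) * Fintype.card F}
        = (↑(D.image θ) : Set (F × F × ↥(degreeLT F (r + 2)))) := by
      ext v
      obtain ⟨a, b, p⟩ := v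
      simp only [Finset.coe_image, Set.mem_image, Finset.mem_coe, Set.mem_setOf_eq]
      rw [S5.wd_min_iff r hr hrq]
      constructor
      · rintro ⟨h1, h2, hg⟩
        obtain ⟨hpeq, hlne⟩ := S5.good_structure r hg
        obtain ⟨hp0, hcard, hor⟩ := hg
        dsimp only at hpeq hlne hp0 hcard hor
        refine ⟨(((p : F[X])).leadingCoeff, ((p : F[X])).roots.toFinset), ?_, ?_⟩
        · rw [hD, Finset.mem_product]
          refine ⟨Finset.mem_filter.mpr ⟨Finset.mem_univ _, hlne⟩, Finset.mem_union.mpr ?_⟩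
          rcases hor with h | h
          · exact Or.inl (Finset.mem_powersetCard.mpr ⟨Finset.subset_univ _,
              show ((p : F[X])).roots.toFinset.card = r by omega⟩)
          · exact Or.inr (Finset.mem_powersetCard.mpr ⟨Finset.subset_univ _,
              show ((p : F[X])).roots.toFinset.card = r + 1 by omega⟩)
        · have hmem' : S5.gpoly ((p : F[X])).leadingCoeff ((p : F[X])).roots.toFinset
              ∈ degreeLT F (r + 2) := by
            rw [← hpeq]; exact p.2
          rw [hθ]
          dsimp only
          rw [dif_pos hmem']
          simp only [Prod.mk.injEq]
          exact ⟨h1.symm, h2.symm, Subtype.ext hpeq.symm⟩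
      · rintro ⟨⟨l, s⟩, hls, heq⟩
        rw [← heq]
        obtain ⟨hl, hor⟩ := hMem l s hls
        have hcle : s.card ≤ r + 1 := by rcases hor with h | h <;> omega
        have hmem' := hgmem l s hl hcle
        obtain ⟨hne, hdeg, hlc, hroots⟩ := S5.gpoly_props l hl s
        rw [hθ]
        dsimp only
        rw [dif_pos hmem']
        refine ⟨rfl, rfl, hne, ?_, ?_⟩
        · show (S5.gpoly l s).roots.toFinset.card = (S5.gpoly l s).natDegree
          rw [hroots, hdeg]
        · show (S5.gpoly l s).natDegree = r ∨ (S5.gpoly l s).natDegree = r + 1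
          rw [hdeg]; exact hor
    rw [hVD, Set.ncard_coe_finset]
    have hinjθ : Set.InjOn θ ↑D := by
      rintro ⟨l, s⟩ h1 ⟨l', s'⟩ h2 heq
      obtain ⟨hl, hor⟩ := hMem l s (Finset.mem_coe.mp h1)
      obtain ⟨hl', hor'⟩ := hMem l' s' (Finset.mem_coe.mp h2)
      have hcle : s.card ≤ r + 1 := by rcases hor with h | h <;> omega
      have hcle' : s'.card ≤ r + 1 := by rcases hor' with h | h <;> omega
      have hm1 := hgmem l s hl hcle
      have hm2 := hgmem l' s' hl' hcle'
      rw [hθ] at heq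
      dsimp only at heq
      rw [dif_pos hm1, dif_pos hm2] at heq
      have hgeq : S5.gpoly l s = S5.gpoly l' s' := by
        have := congrArg (fun t : F × F × degreeLT F (r + 2) => ((t.2.2 : F[X]))) heq
        simpa using this
      obtain ⟨-, -, hlc, hroots⟩ := S5.gpoly_props l hl s
      obtain ⟨-, -, hlc', hroots'⟩ := S5.gpoly_props l' hl' s'
      have : l = l' := by rw [← hlc, ← hlc', hgeq]
      have hss : s = s' := by rw [← hroots, ← hroots', hgeq]
      simp [this, hss]
    rw [Finset.card_image_of_injOn hinjθ, hD, Finset.card_product]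
    have hfc : (univ.filter fun l : F => l ≠ 0).card = Fintype.card F - 1 := by
      rw [Finset.filter_ne' univ (0 : F), Finset.card_erase_of_mem (Finset.mem_univ _),
        Finset.card_univ]
    have hdisj : Disjoint ((univ : Finset F).powersetCard r)
        ((univ : Finset F).powersetCard (r + 1)) := by
      rw [Finset.disjoint_left]
      intro t ht1 ht2
      rw [Finset.mem_powersetCard] at ht1 ht2
      omega
    rw [hfc, Finset.card_union_of_disjoint hdisj, Finset.card_powersetCard,
      Finset.card_powersetCard, Finset.card_univ]
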